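/- Let Q be a finite type with a colouring c : Q → Bool, and let H₁ be the complex vector space of functions (Q → ZMod 2) → ℂ. If α ⊆ Q is a finset with N_w(α) = N_b(α) + 1 (as holds when X_α contains the support of a logical Z operator of the 3D colour code), then the transversal T gate satisfies T_Q ∘ X_α = exp(iπ/4) • (X_α ∘ Z_α ∘ A_α ∘ T_Q) as linear maps on H₁. -/

import Mathlib

/-- Number of white elements of a finset. -/
def Nw {Q : Type*} (c : Q → Bool) (s : Finset Q) : ℕ :=
  (s.filter (fun q => c q = true)).card

/-- Number of black elements of a finset. -/
def Nb {Q : Type*} (c : Q → Bool) (s : Finset Q) : ℕ :=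
  (s.filter (fun q => c q = false)).card

/-- Indicator bit string of a finset. -/
def chi {Q : Type*} [DecidableEq Q] (s : Finset Q) : Q → ZMod 2 :=
  fun q => if q ∈ s then 1 else 0

/-- The one-register state space: complex functions on Q → ZMod 2. -/
abbrev H1 (Q : Type*) : Type _ := (Q → ZMod 2) → ℂ

/-- Pauli X at the positions in α. -/
def Xop {Q : Type*} [DecidableEq Q] (α : Finset Q) (f : H1 Q) : H1 Q :=
  fun x => f (x + chi α)

/-- Pauli Z at the positions in α. -/
def Zop {Q : Type*} (α : Finset Q) (f : H1 Q) : H1 Q :=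
  fun x => (-1 : ℂ) ^ ((α.filter (fun q => x q = 1)).card) * f x

/-- The S/S† error pattern on α: the diagonal operator applying S on white
qubits of α and S† on black qubits of α. -/
def Aop {Q : Type*} (c : Q → Bool) (α : Finset Q) (f : H1 Q) : H1 Q :=
  fun x =>
    Complex.I ^ ((α.filter (fun q => x q = 1 ∧ c q = true)).card) *
    (-Complex.I) ^ ((α.filter (fun q => x q = 1 ∧ c q = false)).card) * f x

/-- The T/T† pattern on α: the diagonal operator applying T on white qubits
of α and T† on black qubits of α, multiplying δ_x by exp(iπ(w−b)/4). -/
noncomputable def Tgate {Q : Type*} (c : Q → Bool) (α : Finset Q) (f : H1 Q) : H1 Q :=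
  fun x =>
    Complex.exp ((Real.pi : ℂ) * Complex.I *
      (((α.filter (fun q => x q = 1 ∧ c q = true)).card : ℂ) -
        ((α.filter (fun q => x q = 1 ∧ c q = false)).card : ℂ)) / 4) * f x

lemma card_filter_univ_split {Q : Type*} [Fintype Q] [DecidableEq Q] (α : Finset Q)
    (P : Q → Prop) [DecidablePred P] :
    (Finset.univ.filter P).card = (α.filter P).card + ((Finset.univ \ α).filter P).card := by
  rw [← Finset.card_union_of_disjoint (Finset.disjoint_filter_filter Finset.disjoint_sdiff),
      ← Finset.filter_union, Finset.union_sdiff_of_subset (Finset.subset_univ α)]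

lemma split_bool {Q : Type*} (s : Finset Q) (p : Q → Prop) [DecidablePred p] (d : Q → Bool) :
    (s.filter fun q => p q ∧ d q = true).card + (s.filter fun q => p q ∧ d q = false).card
      = (s.filter p).card := by
  have h1 : s.filter (fun q => p q ∧ d q = true) = (s.filter p).filter (fun q => d q = true) := by
    ext q; simp [Finset.mem_filter]; tauto
  have h2 : s.filter (fun q => p q ∧ d q = false) = (s.filter p).filter (fun q => ¬ d q = true) := by
    ext q; simp [Finset.mem_filter]; tauto
  rw [h1, h2]
  exact Finset.card_filter_add_card_filter_not (p := fun q => d q = true)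

lemma split_zmod {Q : Type*} (s : Finset Q) (x : Q → ZMod 2) (d : Q → Prop) [DecidablePred d] :
    (s.filter fun q => x q = 1 ∧ d q).card + (s.filter fun q => x q = 0 ∧ d q).card
      = (s.filter d).card := by
  have hz : ∀ a : ZMod 2, a = 0 ↔ ¬ (a = 1) := by decide
  have h1 : s.filter (fun q => x q = 1 ∧ d q) = (s.filter d).filter (fun q => x q = 1) := by
    ext q; simp [Finset.mem_filter]; tauto
  have h2 : s.filter (fun q => x q = 0 ∧ d q) = (s.filter d).filter (fun q => ¬ x q = 1) := by
    ext q; simp [Finset.mem_filter, hz]; tauto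
  rw [h1, h2]
  exact Finset.card_filter_add_card_filter_not (p := fun q => x q = 1)

-- on α, (x + chi α) q = 1 ↔ x q = 0
lemma filter_shift {Q : Type*} [DecidableEq Q] (α : Finset Q) (x : Q → ZMod 2)
    (d : Q → Prop) [DecidablePred d] :
    α.filter (fun q => (x + chi α) q = 1 ∧ d q) = α.filter (fun q => x q = 0 ∧ d q) := by
  apply Finset.filter_congr
  intro q hq
  have : (x + chi α) q = x q + 1 := by simp [chi, hq]
  rw [this, add_eq_right]

theorem stmt_17 {Q : Type*} [DecidableEq Q] [Fintype Q] (c : Q → Bool)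
    (α : Finset Q) (h : Nw c α = Nb c α + 1) :
    Tgate c (Finset.univ : Finset Q) ∘ Xop α =
      Complex.exp ((Real.pi : ℂ) * Complex.I / 4) •
        (Xop α ∘ Zop α ∘ Aop c α ∘ Tgate c (Finset.univ : Finset Q)) := by
  funext f x
  simp only [Function.comp_apply, Pi.smul_apply, smul_eq_mul, Xop, Zop, Aop, Tgate]
  -- complement filter: chi α vanishes off α
  have filter_compl : ∀ (d : Q → Prop) [DecidablePred d],
      (Finset.univ \ α).filter (fun q => (x + chi α) q = 1 ∧ d q)
        = (Finset.univ \ α).filter (fun q => x q = 1 ∧ d q) := by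
    intro d _
    apply Finset.filter_congr
    intro q hq
    have hq' : q ∉ α := (Finset.mem_sdiff.mp hq).2
    simp [chi, hq']
  -- split univ filters and rewrite shifted filters
  rw [card_filter_univ_split α (fun q => x q = 1 ∧ c q = true),
      card_filter_univ_split α (fun q => x q = 1 ∧ c q = false),
      card_filter_univ_split α (fun q => (x + chi α) q = 1 ∧ c q = true),
      card_filter_univ_split α (fun q => (x + chi α) q = 1 ∧ c q = false),
      filter_compl (fun q => c q = true), filter_compl (fun q => c q = false),
      filter_shift α x (fun q => c q = true), filter_shift α x (fun q => c q = false),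
      ← split_bool α (fun q => (x + chi α) q = 1) c,
      filter_shift α x (fun q => c q = true), filter_shift α x (fun q => c q = false)]
  set W1 := (α.filter (fun q => x q = 1 ∧ c q = true)).card with hW1
  set B1 := (α.filter (fun q => x q = 1 ∧ c q = false)).card with hB1
  set W0 := (α.filter (fun q => x q = 0 ∧ c q = true)).card with hW0
  set B0 := (α.filter (fun q => x q = 0 ∧ c q = false)).card with hB0
  set Cw := ((Finset.univ \ α).filter (fun q => x q = 1 ∧ c q = true)).card with hCw
  set Cb := ((Finset.univ \ α).filter (fun q => x q = 1 ∧ c q = false)).card with hCb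
  have hc : W1 + W0 = B1 + B0 + 1 := by
    have hW := split_zmod α x (fun q => c q = true)
    have hB := split_zmod α x (fun q => c q = false)
    simp only [← hW1, ← hW0, ← hB1, ← hB0] at hW hB
    unfold Nw Nb at h
    omega
  have regroup : ∀ (a b : ℕ) (z : ℂ),
      ((-1:ℂ))^(a+b) * (Complex.I^a * (-Complex.I)^b * z)
        = (-Complex.I)^a * Complex.I^b * z := by
    intro a b z
    have h1 : ((-1:ℂ))^a * Complex.I^a = (-Complex.I)^a := by
      rw [← mul_pow]; norm_num
    have h2 : ((-1:ℂ))^b * (-Complex.I)^b = Complex.I^b := by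
      rw [← mul_pow]; norm_num
    rw [← h1, ← h2, pow_add]; ring
  rw [regroup]
  have hI : ∀ n : ℕ, Complex.I ^ n = Complex.exp ((n : ℂ) * ((Real.pi : ℂ) * Complex.I / 2)) := by
    intro n
    rw [Complex.exp_nat_mul]
    congr 1
    rw [show (Real.pi : ℂ) * Complex.I / 2 = ((Real.pi / 2 : ℝ) : ℂ) * Complex.I by
          push_cast; ring,
        Complex.exp_mul_I, ← Complex.ofReal_cos, ← Complex.ofReal_sin,
        Real.cos_pi_div_two, Real.sin_pi_div_two]
    simp
  have hnI : ∀ n : ℕ, (-Complex.I) ^ n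
      = Complex.exp (-((n : ℂ) * ((Real.pi : ℂ) * Complex.I / 2))) := by
    intro n
    rw [Complex.exp_neg, ← hI, ← inv_pow, Complex.inv_I]
  have hco : Complex.exp ((Real.pi : ℂ) * Complex.I * ((↑(W1 + Cw) : ℂ) - ↑(B1 + Cb)) / 4)
      = Complex.exp ((Real.pi : ℂ) * Complex.I / 4) * ((-Complex.I) ^ W0 * Complex.I ^ B0 *
          Complex.exp ((Real.pi : ℂ) * Complex.I * ((↑(W0 + Cw) : ℂ) - ↑(B0 + Cb)) / 4)) := by
    rw [hI, hnI, ← Complex.exp_add, ← Complex.exp_add, ← Complex.exp_add]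
    congr 1
    have hc' : (W1 : ℂ) + W0 = (B1 : ℂ) + B0 + 1 := by exact_mod_cast hc
    push_cast
    linear_combination ((Real.pi : ℂ) * Complex.I / 4) * hc'
  linear_combination f (x + chi α) * hco
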